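/- Let g ≥ 1 and m ≥ 1 be integers, let ω denote the standard symplectic (alternating, unimodular) bilinear form on ℤ^{2g}, and let a ∈ ℤ^{2g} be a vector such that the linear functional x ↦ ω(x, a) maps ℤ^{2g} onto ℤ. Let T : ℤ^{2g} → ℤ^{2g} be the homomorphism T(x) = x + m·ω(x, a)·a (the m-th power of the transvection along a). Then the cokernel of T − id, i.e., the group of coinvariants ℤ^{2g} / (T − id)(ℤ^{2g}), is isomorphic to ℤ^{2g−1} × (ℤ/mℤ). -/

import Mathlib

/-- The standard symplectic (alternating, unimodular) bilinear form on
`ℤ^{2g} = (Fin g → ℤ) × (Fin g → ℤ)`, given in the standard basis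
`e₁, f₁, …, e_g, f_g` by `ω (e i) (f i) = 1 = -ω (f i) (e i)` and all other
pairings zero: here the first factor carries the `e`-coordinates and the second
the `f`-coordinates. -/
def stdSymplectic (g : ℕ) (u v : (Fin g → ℤ) × (Fin g → ℤ)) : ℤ :=
  ∑ i, (u.1 i * v.2 i - u.2 i * v.1 i)

/-- Let `ω` be the standard symplectic form on `ℤ^{2g}` and let `a ∈ ℤ^{2g}` be
such that `x ↦ ω x a` is onto `ℤ` (i.e. `a` is primitive). If
`T x = x + m·ω(x,a)·a` is the `m`-th power of the transvection along `a`, then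
the group of coinvariants `ℤ^{2g} / (T - id)(ℤ^{2g})` is isomorphic to
`ℤ^{2g-1} × ℤ/mℤ`. -/
theorem coinvariants_of_power_of_transvection (g m : ℕ) (hg : 1 ≤ g) (hm : 1 ≤ m)
    (a : (Fin g → ℤ) × (Fin g → ℤ))
    (ha : Function.Surjective fun x => stdSymplectic g x a)
    (T : ((Fin g → ℤ) × (Fin g → ℤ)) → ((Fin g → ℤ) × (Fin g → ℤ)))
    (hT : ∀ x, T x = x + ((m : ℤ) * stdSymplectic g x a) • a) :
    Nonempty ((((Fin g → ℤ) × (Fin g → ℤ)) ⧸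
        AddSubgroup.closure (Set.range fun x => T x - x))
      ≃+ ((Fin (2 * g - 1) → ℤ) × ZMod m)) := by
  classical
  obtain ⟨x₀, hx₀⟩ := ha 1
  -- the linear functional `f v = ω(x₀, v)`, with `f a = 1`
  let f : ((Fin g → ℤ) × (Fin g → ℤ)) →ₗ[ℤ] ℤ :=
    { toFun := fun v => stdSymplectic g x₀ v
      map_add' := by
        intro u v
        simp only [stdSymplectic, Prod.fst_add, Prod.snd_add, Pi.add_apply,
          ← Finset.sum_add_distrib]
        exact Finset.sum_congr rfl fun i _ => by ring
      map_smul' := by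
        intro c v
        simp only [stdSymplectic, Prod.smul_fst, Prod.smul_snd, Pi.smul_apply,
          smul_eq_mul, RingHom.id_apply, Finset.mul_sum]
        exact Finset.sum_congr rfl fun i _ => by ring }
  have hfa : f a = 1 := hx₀
  -- the projection onto the kernel of `f`
  have hmem : ∀ v : (Fin g → ℤ) × (Fin g → ℤ), v - f v • a ∈ LinearMap.ker f := by
    intro v
    rw [LinearMap.mem_ker, map_sub, map_smul, hfa, smul_eq_mul, mul_one, sub_self]
  let π : ((Fin g → ℤ) × (Fin g → ℤ)) →ₗ[ℤ] LinearMap.ker f :=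
    { toFun := fun v => ⟨v - f v • a, hmem v⟩
      map_add' := by
        intro u v
        refine Subtype.ext ?_
        show (u + v) - f (u + v) • a = (u - f u • a) + (v - f v • a)
        rw [map_add, add_smul]
        abel
      map_smul' := by
        intro c v
        refine Subtype.ext ?_
        show (c • v) - f (c • v) • a = c • (v - f v • a)
        rw [map_smul, smul_eq_mul, mul_smul, smul_sub] }
  have hπ : ∀ v : (Fin g → ℤ) × (Fin g → ℤ), (π v : (Fin g → ℤ) × (Fin g → ℤ)) = v - f v • a :=
    fun _ => rfl
  -- the splitting `ℤ^{2g} ≃ ker f × ℤ`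
  let e : ((Fin g → ℤ) × (Fin g → ℤ)) ≃ₗ[ℤ] (LinearMap.ker f × ℤ) :=
    { toFun := fun v => (π v, f v)
      invFun := fun p => (p.1 : (Fin g → ℤ) × (Fin g → ℤ)) + p.2 • a
      left_inv := by
        intro v
        show ((v - f v • a) + f v • a) = v
        abel
      right_inv := by
        rintro ⟨⟨w, hw⟩, n⟩
        have hfw : f w = 0 := hw
        have hf : f (w + n • a) = n := by
          rw [map_add, map_smul, hfa, hfw, smul_eq_mul, mul_one, zero_add]
        refine Prod.ext (Subtype.ext ?_) hf
        show (w + n • a) - f (w + n • a) • a = w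
        rw [hf]; abel
      map_add' := fun u v => Prod.ext (map_add π u v) (map_add f u v)
      map_smul' := fun c v => Prod.ext (map_smul π c v) (map_smul f c v) }
  -- the kernel of `f` is free of rank `2g - 1`
  let B : Module.Basis (Fin g ⊕ Fin g) ℤ ((Fin g → ℤ) × (Fin g → ℤ)) :=
    Module.Basis.prod (Pi.basisFun ℤ (Fin g)) (Pi.basisFun ℤ (Fin g))
  obtain ⟨n, b⟩ := Submodule.basisOfPid B (LinearMap.ker f)
  haveI : Module.Free ℤ (LinearMap.ker f) := Module.Free.of_basis b
  haveI : Module.Finite ℤ (LinearMap.ker f) := Module.Finite.of_basis b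
  have hrankM : Module.finrank ℤ ((Fin g → ℤ) × (Fin g → ℤ)) = 2 * g := by
    rw [Module.finrank_eq_card_basis B]
    simp [Fintype.card_sum, two_mul]
  have hrankK : Module.finrank ℤ (LinearMap.ker f) = n := (Module.finrank_eq_card_basis b).trans (Fintype.card_fin n)
  have hn : n = 2 * g - 1 := by
    have h1 : Module.finrank ℤ ((Fin g → ℤ) × (Fin g → ℤ))
        = Module.finrank ℤ (LinearMap.ker f × ℤ) := LinearEquiv.finrank_eq e
    rw [hrankM, Module.finrank_prod, hrankK, Module.finrank_self] at h1
    omega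
  let b' : Module.Basis (Fin (2 * g - 1)) ℤ (LinearMap.ker f) := b.reindex (finCongr hn)
  -- the additive hom `ℤ^{2g} →+ ker f × ZMod m`
  let Φ : ((Fin g → ℤ) × (Fin g → ℤ)) →+ (LinearMap.ker f × ZMod m) :=
    AddMonoidHom.prod π.toAddMonoidHom
      ((Int.castAddHom (ZMod m)).comp f.toAddMonoidHom)
  have hΦ : ∀ v : (Fin g → ℤ) × (Fin g → ℤ), Φ v = (π v, ((f v : ℤ) : ZMod m)) := fun v => rfl
  -- its kernel is the subgroup of coinvariant relations
  have hker : AddSubgroup.closure (Set.range fun x => T x - x) = Φ.ker := by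
    apply le_antisymm
    · rw [AddSubgroup.closure_le]
      rintro _ ⟨x, rfl⟩
      show Φ (T x - x) = 0
      have hTx : T x - x = ((m : ℤ) * stdSymplectic g x a) • a := by
        rw [hT x]; abel
      rw [hTx, hΦ]
      refine Prod.ext (Subtype.ext ?_) ?_
      · show ((m : ℤ) * stdSymplectic g x a) • a
            - f (((m : ℤ) * stdSymplectic g x a) • a) • a = 0
        rw [map_smul, hfa, smul_eq_mul, mul_one, sub_self]
      · show ((f (((m : ℤ) * stdSymplectic g x a) • a) : ℤ) : ZMod m) = (0 : ZMod m)
        rw [map_smul, hfa, smul_eq_mul, mul_one]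
        push_cast
        simp [ZMod.natCast_self]
    · intro v hv
      rw [AddMonoidHom.mem_ker, hΦ, Prod.ext_iff] at hv
      obtain ⟨h1, h2⟩ := hv
      have h1' : v - f v • a = 0 := by
        have := congrArg Subtype.val h1
        simpa [hπ] using this
      have h2' : (m : ℤ) ∣ f v := (ZMod.intCast_zmod_eq_zero_iff_dvd _ _).mp h2
      obtain ⟨k, hk⟩ := h2'
      obtain ⟨x, hx⟩ := ha k
      have hxv : T x - x = v := by
        rw [hT x]
        have hv' : v = f v • a := by rw [← sub_eq_zero]; exact h1'
        rw [hv', hk]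
        simp only [hx]
        abel
      exact AddSubgroup.subset_closure ⟨x, hxv⟩
  -- surjectivity
  have hsurj : Function.Surjective Φ := by
    rintro ⟨⟨w, hw⟩, c⟩
    obtain ⟨nn, hnn⟩ := ZMod.intCast_surjective c
    have hfw : f w = 0 := hw
    have hf : f (w + nn • a) = nn := by
      rw [map_add, map_smul, hfa, hfw, smul_eq_mul, mul_one, zero_add]
    refine ⟨w + nn • a, ?_⟩
    rw [hΦ]
    refine Prod.ext (Subtype.ext ?_) ?_
    · show (w + nn • a) - f (w + nn • a) • a = w
      rw [hf]; abel
    · show ((f (w + nn • a) : ℤ) : ZMod m) = c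
      rw [hf, hnn]
  -- assemble
  exact ⟨((QuotientAddGroup.quotientAddEquivOfEq hker).trans
    (QuotientAddGroup.quotientKerEquivOfSurjective Φ hsurj)).trans
    (AddEquiv.prodCongr b'.equivFun.toAddEquiv (AddEquiv.refl _))⟩
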